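/- Let F be a field, V a nonsingular k×k matrix over F with columns v_1,…,v_k, P a nonsingular k×k matrix over F with entries p_{ij}, Q = P⁻¹ = [q_{ij}], U = V·P with columns u_1,…,u_k, and V̂ = (Vᵗ)⁻¹. Let X be any k×k matrix over F with columns x_1,…,x_k, let δ, ε ∈ F, set Y = δ V̂ Xᵗ U + ε X P with columns y_1,…,y_k, and let z_j = ∑_{ℓ=1}^k p_{ℓj} x_ℓ. Then for any a, b ∈ {1,…,k}: ∑_{j ∈ {1,…,k}∖{b}} q_{ja} (u_bᵗ y_j) + (δ + ε) q_{ba} ∑_{i ∈ {1,…,k}∖{a}} p_{ib} (u_bᵗ x_i) = δ (v_aᵗ z_b) + (ε − (ε + δ) p_{ab} q_{ba}) (u_bᵗ x_a). -/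
import Mathlib


open Matrix Finset

/-- The exchanged packet sent from newcomer `k+b` to newcomer `a`:
`∑_{j≠b} q_{ja}(u_bᵗ y_j) + (δ+ε) q_{ba} ∑_{i≠a} p_{ib}(u_bᵗ x_i)
  = δ (v_aᵗ z_b) + (ε − (ε+δ)p_{ab}q_{ba})(u_bᵗ x_a)`. -/
theorem exchanged_packet_identity
    {F : Type*} [Field F] {k : ℕ}
    (V P : Matrix (Fin k) (Fin k) F)
    (hV : IsUnit V.det) (hP : IsUnit P.det)
    (X : Matrix (Fin k) (Fin k) F) (δ ε : F) (a b : Fin k) :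
    (∑ j ∈ univ.erase b, P⁻¹ j a *
        ((fun idx => (V * P) idx b) ⬝ᵥ
          (fun idx => (δ • ((Vᵀ)⁻¹ * Xᵀ * (V * P)) + ε • (X * P)) idx j))) +
      (δ + ε) * P⁻¹ b a *
        (∑ i ∈ univ.erase a, P i b *
          ((fun idx => (V * P) idx b) ⬝ᵥ (fun idx => X idx i))) =
    δ * ((fun idx => V idx a) ⬝ᵥ (fun idx => ∑ ℓ, P ℓ b * X idx ℓ)) +
      (ε - (ε + δ) * P a b * P⁻¹ b a) *
        ((fun idx => (V * P) idx b) ⬝ᵥ (fun idx => X idx a)) := by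
  have hPQ : P * P⁻¹ = 1 := mul_nonsing_inv P hP
  have hVc : ∀ W : Matrix (Fin k) (Fin k) F, Vᵀ * ((Vᵀ)⁻¹ * W) = W := fun W =>
    mul_nonsing_inv_cancel_left _ _ (by simpa using hV)
  have key : ∀ (M N : Matrix (Fin k) (Fin k) F) (i j : Fin k),
      (fun idx => M idx i) ⬝ᵥ (fun idx => N idx j) = (Mᵀ * N) i j := by
    intro M N i j
    simp [Matrix.mul_apply, dotProduct, Matrix.transpose_apply]
  set Y := δ • ((Vᵀ)⁻¹ * Xᵀ * (V * P)) + ε • (X * P) with hY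
  have hz : (fun idx => ∑ ℓ, P ℓ b * X idx ℓ) = fun idx => (X * P) idx b := by
    funext idx; simp [Matrix.mul_apply, mul_comm]
  rw [hz]
  simp only [key]
  -- full sums to matrix entries
  have h1 : ∑ j, P⁻¹ j a * ((V * P)ᵀ * Y) b j = ((V * P)ᵀ * Y * P⁻¹) b a := by
    rw [Matrix.mul_apply]
    exact Finset.sum_congr rfl fun j _ => mul_comm _ _
  have h2 : (V * P)ᵀ * Y * P⁻¹ = δ • (Pᵀ * Xᵀ * V) + ε • ((V * P)ᵀ * X) := by
    simp [hY, Matrix.mul_add, Matrix.add_mul, Matrix.mul_smul, Matrix.smul_mul,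
      Matrix.mul_assoc, Matrix.transpose_mul, hPQ, hVc, Matrix.mul_one]
  have h3 : ((V * P)ᵀ * Y) b b = (δ + ε) * ((V * P)ᵀ * (X * P)) b b := by
    have e1 : (V * P)ᵀ * Y = δ • (Pᵀ * (Xᵀ * (V * P))) + ε • ((V * P)ᵀ * (X * P)) := by
      simp [hY, Matrix.mul_add, Matrix.mul_smul, Matrix.mul_assoc,
        Matrix.transpose_mul, hVc]
    have e2 : (Pᵀ * (Xᵀ * (V * P))) b b = ((V * P)ᵀ * (X * P)) b b := by
      have : Pᵀ * (Xᵀ * (V * P)) = ((V * P)ᵀ * (X * P))ᵀ := by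
        simp [Matrix.transpose_mul, Matrix.mul_assoc]
      rw [this, Matrix.transpose_apply]
    rw [e1]
    simp [e2]
    ring
  have h4 : ∑ i, P i b * ((V * P)ᵀ * X) b i = ((V * P)ᵀ * (X * P)) b b := by
    rw [← Matrix.mul_assoc, Matrix.mul_apply]
    exact Finset.sum_congr rfl fun i _ => mul_comm _ _
  have h5 : (Pᵀ * Xᵀ * V) b a = (Vᵀ * (X * P)) a b := by
    have : Pᵀ * Xᵀ * V = (Vᵀ * (X * P))ᵀ := by
      simp [Matrix.transpose_mul, Matrix.mul_assoc]
    rw [this, Matrix.transpose_apply]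
  rw [Finset.sum_erase_eq_sub (Finset.mem_univ b),
      Finset.sum_erase_eq_sub (Finset.mem_univ a), h1, h2, h3, h4]
  simp only [Matrix.add_apply, Matrix.smul_apply, smul_eq_mul, h5]
  ring
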